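/- arXiv:math/0612596 — 3 statements merged into one kernel-verified Lean document; each statement's English description precedes it below -/
import Mathlib

section
/- Let C : ℝ → Matrix (Fin n) (Fin n) ℝ be a differentiable solution of the Riccati equation C' = C² defined on all of ℝ. Then C(0) has no nonzero real eigenvalue. -/
open Set

/-- Bundled continuous linear map version of `mulVec`. -/
noncomputable def mulVecCLM (n : ℕ) : Matrix (Fin n) (Fin n) ℝ →ₗ[ℝ]
    ((Fin n → ℝ) →L[ℝ] (Fin n → ℝ)) :=
  (LinearMap.toContinuousLinearMap.toLinearMap).comp (Matrix.toLin').toLinearMap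

lemma mulVecCLM_apply (n : ℕ) (M : Matrix (Fin n) (Fin n) ℝ) (y : Fin n → ℝ) :
    mulVecCLM n M y = M.mulVec y := by
  simp [mulVecCLM, Matrix.toLin'_apply]

/-- Gronwall-type uniqueness: a solution of the linear ODE `w' = C t ⬝ w` vanishing at `0`
vanishes everywhere. -/
lemma riccati_aux (n : ℕ) (C : ℝ → Matrix (Fin n) (Fin n) ℝ) (hcont : Continuous C)
    (w : ℝ → Fin n → ℝ) (hw' : ∀ t, HasDerivAt w ((C t).mulVec (w t)) t)
    (hw0 : w 0 = 0) (T : ℝ) : w T = 0 := by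
  have key : ∀ a b : ℝ, a ≤ b → w a = 0 ∨ w b = 0 → EqOn w (fun _ => (0 : Fin n → ℝ)) (Icc a b) := by
    intro a b hab hinit
    have hne : (Icc a b).Nonempty := Set.nonempty_Icc.2 hab
    have hK' : Continuous fun t => ‖mulVecCLM n (C t)‖₊ :=
      continuous_nnnorm.comp ((mulVecCLM n).continuous_of_finiteDimensional.comp hcont)
    obtain ⟨u, hu, hmax⟩ := isCompact_Icc.exists_isMaxOn hne hK'.continuousOn
    have hK : ∀ t ∈ Icc a b, ‖mulVecCLM n (C t)‖₊ ≤ ‖mulVecCLM n (C u)‖₊ := fun t ht => hmax ht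
    set K : NNReal := ‖mulVecCLM n (C u)‖₊ with hKdef
    set clamp : ℝ → ℝ := fun t => max a (min t b) with hclamp
    have hclampmem : ∀ t, clamp t ∈ Icc a b := fun t =>
      ⟨le_max_left _ _, max_le hab (min_le_right _ _)⟩
    have hclampeq : ∀ t ∈ Icc a b, clamp t = t := by
      intro t ht
      simp [hclamp, min_eq_left ht.2, max_eq_right ht.1]
    set V : ℝ → (Fin n → ℝ) → (Fin n → ℝ) := fun t y => mulVecCLM n (C (clamp t)) y with hV
    have hlip : ∀ t, LipschitzOnWith K (V t) univ := by
      intro t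
      exact ((mulVecCLM n (C (clamp t))).lipschitz.weaken (hK _ (hclampmem t))).lipschitzOnWith
    have hfd : ∀ t ∈ Icc a b, HasDerivAt w (V t (w t)) t := by
      intro t ht
      rw [hV]
      simp only [mulVecCLM_apply, hclampeq t ht]
      exact hw' t
    have hgd : ∀ t : ℝ, HasDerivAt (fun _ : ℝ => (0 : Fin n → ℝ)) (V t 0) t := by
      intro t
      simpa [hV, map_zero] using (hasDerivAt_const t (0 : Fin n → ℝ))
    have hwc : ContinuousOn w (Icc a b) := fun t ht => ((hw' t).continuousAt).continuousWithinAt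
    rcases hinit with h0 | h0
    · exact ODE_solution_unique_of_mem_Icc_right (s := fun _ => univ) (fun t _ => hlip t) hwc
        (fun t ht => (hfd t (Ico_subset_Icc_self ht)).hasDerivWithinAt)
        (fun _ _ => trivial) continuousOn_const
        (fun t ht => (hgd t).hasDerivWithinAt) (fun _ _ => trivial) h0
    · exact ODE_solution_unique_of_mem_Icc_left (s := fun _ => univ) (fun t _ => hlip t) hwc
        (fun t ht => (hfd t (Ioc_subset_Icc_self ht)).hasDerivWithinAt)
        (fun _ _ => trivial) continuousOn_const
        (fun t ht => (hgd t).hasDerivWithinAt) (fun _ _ => trivial) h0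
  rcases le_total 0 T with h | h
  · exact key 0 T h (Or.inl hw0) ⟨h, le_refl T⟩
  · exact key T 0 h (Or.inr hw0) ⟨le_refl T, h⟩

/-- A globally defined differentiable solution of the matrix Riccati equation `C' = C²`
has no nonzero real eigenvalue at time `0`. -/
theorem stmt2 (n : ℕ) (C : ℝ → Matrix (Fin n) (Fin n) ℝ)
    (hC : ∀ t : ℝ, ∀ i j, HasDerivAt (fun s => C s i j) ((C t * C t) i j) t) :
    ∀ lam : ℝ, lam ≠ 0 → ∀ v : Fin n → ℝ, v ≠ 0 → (C 0).mulVec v ≠ lam • v := by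
  intro lam hlam v hv0 heq
  set w : ℝ → Fin n → ℝ := fun t => (1 - lam * t) • (C t).mulVec v - lam • v with hwdef
  have hcont : Continuous C := by
    apply continuous_pi; intro i; apply continuous_pi; intro j
    have : Differentiable ℝ (fun s => C s i j) := fun t => (hC t i j).differentiableAt
    exact this.continuous
  have hw' : ∀ t, HasDerivAt w ((C t).mulVec (w t)) t := by
    intro t
    have hval : (C t).mulVec (w t) =
        fun i => -lam * ((C t).mulVec v i) + (1 - lam * t) * ((C t * C t).mulVec v i) := by
      funext i
      have h : (C t).mulVec (w t)
          = (1 - lam * t) • ((C t * C t).mulVec v) - lam • ((C t).mulVec v) := by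
        rw [hwdef]
        simp only [Matrix.mulVec_sub, Matrix.mulVec_smul, Matrix.mulVec_mulVec]
      rw [h]
      simp only [Pi.sub_apply, Pi.smul_apply, smul_eq_mul]
      ring
    rw [hval, hasDerivAt_pi]
    intro i
    have h1 : HasDerivAt (fun s => ((C s).mulVec v) i) (((C t * C t).mulVec v) i) t := by
      simp only [Matrix.mulVec, dotProduct]
      exact HasDerivAt.fun_sum fun j _ => (hC t i j).mul_const (v j)
    have h2 : HasDerivAt (fun s : ℝ => 1 - lam * s) (-lam) t := by
      simpa using ((hasDerivAt_id t).const_mul lam).const_sub 1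
    have h3 := (h2.mul h1).sub_const (lam * v i)
    have h4 : (fun s => w s i) = fun s => (1 - lam * s) * ((C s).mulVec v) i - lam * v i := by
      funext s; simp [hwdef]
    rw [h4]
    convert h3 using 1
    try ring
    funext s
    simp only [Pi.mul_apply]
    ring
  have hw0 : w 0 = 0 := by
    simp [hwdef, heq]
  have hT := riccati_aux n C hcont w hw' hw0 (1 / lam)
  have hTval : w (1 / lam) = -(lam • v) := by
    have hz : 1 - lam * (1 / lam) = 0 := by field_simp; norm_num
    simp only [hwdef, hz, zero_smul, zero_sub]
  rw [hTval] at hT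
  exact hv0 (by simpa [hlam] using (neg_eq_zero.mp hT))
end

section
/- Let s : V × V → ℂ be a symmetric bilinear form on a complex vector space satisfying s(X,Y)·s(Z,W) = s(X,W)·s(Z,Y) for all X,Y,Z,W. If there exists X with s(X,X) ≠ 0, then the associated symmetric operator has rank exactly 1; interpreting s as ⟨S(·,·),η⟩ for a shape operator A_η that is trace-free and nonzero, the corresponding real symmetric operator A_η on the underlying 4-dimensional real space has rank 2. -/
/-- Let `V` be the complex 2-dimensional `(1,0)`-space of a 4-real-dimensional Kähler
vector space, and `s` a symmetric bilinear form on `V` (the `η`-component of the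
`(2,0)`-part of the second fundamental form) satisfying the curvature identity
`s(X,Y)s(Z,W) = s(X,W)s(Z,Y)` and `s(X,X) ≠ 0` for some `X`. If `A` is the associated
real shape operator (a conjugate-linear real endomorphism with `s X Y = ⟨A X, Y⟩`),
trace-free and nonzero, then `s` has rank exactly one and `A` has (real) rank two. -/
theorem stmt6 (V : Type*) [NormedAddCommGroup V] [InnerProductSpace ℂ V]
    [FiniteDimensional ℂ V] (hdim : Module.finrank ℂ V = 2)
    (s : V →ₗ[ℂ] V →ₗ[ℂ] ℂ)
    (hsymm : ∀ X Y, s X Y = s Y X)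
    (hq : ∀ X Y Z W, s X Y * s Z W = s X W * s Z Y)
    (hX : ∃ X, s X X ≠ 0)
    (A : V →ₗ[ℝ] V)
    (hconj : ∀ (c : ℂ) (X : V), A (c • X) = (starRingEnd ℂ) c • A X)
    (hs : ∀ X Y : V, s X Y = (inner ℂ (A X) Y : ℂ))
    (htrace : LinearMap.trace ℝ V A = 0) (hA0 : A ≠ 0) :
    LinearMap.rank s = 1 ∧ Module.finrank ℝ (LinearMap.range A) = 2 := by
  obtain ⟨X₀, hc⟩ := hX
  set c : ℂ := s X₀ X₀ with hcdef
  -- key pointwise formula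
  have hkey : ∀ Y Z, s Y Z = s Y X₀ * s X₀ Z / c := by
    intro Y Z
    have h := hq Y Z X₀ X₀
    field_simp
    linear_combination h
  have hfun : ∀ Y, s Y = (s Y X₀ / c) • s X₀ := by
    intro Y
    ext Z
    simp only [LinearMap.smul_apply, smul_eq_mul]
    rw [hkey Y Z]; ring
  -- range s = span {s X₀}
  have hsx0 : s X₀ ≠ 0 := by
    intro h
    apply hc
    rw [hcdef, h]; simp
  have hrange : LinearMap.range s = Submodule.span ℂ {s X₀} := by
    apply le_antisymm
    · rintro _ ⟨Y, rfl⟩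
      rw [hfun Y]
      exact Submodule.smul_mem _ _ (Submodule.mem_span_singleton_self _)
    · rw [Submodule.span_le, Set.singleton_subset_iff]
      exact ⟨X₀, rfl⟩
  have hrank : LinearMap.rank s = 1 := by
    rw [LinearMap.rank, hrange, Module.rank_eq_one_iff_finrank_eq_one]
    exact finrank_span_singleton hsx0
  refine ⟨hrank, ?_⟩
  -- the functional φ Y = s Y X₀
  set φ : V →ₗ[ℂ] ℂ := s.flip X₀ with hφdef
  have hφ : ∀ Y, φ Y = s Y X₀ := fun Y => rfl
  have hker : ∀ Y, A Y = 0 ↔ φ Y = 0 := by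
    intro Y
    constructor
    · intro h
      rw [hφ, hs Y X₀, h, inner_zero_left]
    · intro h
      have hsY : s Y (A Y) = 0 := by
        rw [hkey Y (A Y), hφ] at *
        rw [h]; ring
      rw [hs] at hsY
      exact inner_self_eq_zero.mp hsY
  -- φ is surjective
  have hφs : LinearMap.range φ = ⊤ := by
    rw [LinearMap.range_eq_top]
    intro z
    refine ⟨(z / c) • X₀, ?_⟩
    rw [map_smul, hφ, ← hcdef, smul_eq_mul]
    field_simp
  have hkerφ : Module.finrank ℂ (LinearMap.ker φ) = 1 := by
    have h := LinearMap.finrank_range_add_finrank_ker φ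
    rw [hφs, hdim, finrank_top, Module.finrank_self] at h
    omega
  have hkerA : LinearMap.ker A = (LinearMap.ker φ).restrictScalars ℝ := by
    ext Y
    simp only [LinearMap.mem_ker, Submodule.restrictScalars_mem]
    exact hker Y
  have hVR : Module.finrank ℝ V = 4 := by
    have := Module.finrank_mul_finrank ℝ ℂ V
    rw [hdim, Complex.finrank_real_complex] at this
    omega
  have hkerAR : Module.finrank ℝ (LinearMap.ker A) = 2 := by
    rw [hkerA]
    have h1 : Module.finrank ℝ ((LinearMap.ker φ).restrictScalars ℝ)
        = Module.finrank ℝ (LinearMap.ker φ) := rfl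
    have h2 := Module.finrank_mul_finrank ℝ ℂ (LinearMap.ker φ)
    rw [hkerφ, Complex.finrank_real_complex] at h2
    omega
  have hfin : FiniteDimensional ℝ V := Module.Finite.trans ℂ V
  have h := LinearMap.finrank_range_add_finrank_ker A
  rw [hkerAR, hVR] at h
  omega
end

section
/- Let Q̂ be a positive definite Hermitian matrix and B an r×r complex matrix such that B·Q̂ is symmetric when expressed in a basis where Q̂ is the identity (i.e., under the change of basis making Q̂ = I, B becomes complex symmetric). Then there exists a unitary matrix U such that conj(U) B U⁻¹ is diagonal with nonnegative real entries. -/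
open Matrix ComplexOrder

lemma star_mulVec' (n : ℕ) (A : Matrix (Fin n) (Fin n) ℂ) (x : Fin n → ℂ) :
    (fun i => star ((A *ᵥ x) i)) = (A.map (starRingEnd ℂ)) *ᵥ (fun i => star (x i)) := by
  ext i
  simp [Matrix.mulVec, dotProduct, Matrix.map_apply, star_sum, star_mul']

lemma step1 (m : ℕ) (A : Matrix (Fin (m+1)) (Fin (m+1)) ℂ) (hsymm : Aᵀ = A) :
    ∃ (σ : ℝ) (v : EuclideanSpace ℂ (Fin (m+1))), 0 ≤ σ ∧ ‖v‖ = 1 ∧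
      A *ᵥ (fun i => star (v i)) = (σ : ℂ) • (v : Fin (m+1) → ℂ) := by
  have hA' : Aᴴ = A.map (starRingEnd ℂ) := by
    ext i j
    simp [Matrix.conjTranspose_apply, Matrix.map_apply, ← congrFun (congrFun hsymm i) j,
      Matrix.transpose_apply]
  have hM : (A * Aᴴ).PosSemidef := Matrix.posSemidef_self_mul_conjTranspose A
  have hHerm := hM.isHermitian
  set w : EuclideanSpace ℂ (Fin (m+1)) := hHerm.eigenvectorBasis 0 with hw
  set μ : ℝ := hHerm.eigenvalues 0 with hμdef
  have hmul : (A * Aᴴ) *ᵥ ⇑w = (μ : ℂ) • ⇑w := by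
    simpa using hHerm.mulVec_eigenvectorBasis 0
  have hμ : 0 ≤ μ := hM.eigenvalues_nonneg 0
  set σ : ℝ := Real.sqrt μ with hσdef
  have hσ : 0 ≤ σ := Real.sqrt_nonneg μ
  have hσ2 : (σ : ℂ) * σ = (μ : ℂ) := by
    have : σ * σ = μ := Real.mul_self_sqrt hμ
    exact_mod_cast this
  have hwnorm : ‖w‖ = 1 := hHerm.eigenvectorBasis.orthonormal.1 0
  set u : Fin (m+1) → ℂ := A *ᵥ (fun i => star (w i)) + (σ : ℂ) • ⇑w with hu
  have hAu : A *ᵥ (fun i => star (u i)) = (σ : ℂ) • u := by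
    have h1 : (fun i => star (u i))
        = (A.map (starRingEnd ℂ)) *ᵥ ⇑w + (σ : ℂ) • (fun i => star (w i)) := by
      ext i
      simp only [hu, Pi.add_apply, Pi.smul_apply, star_add, star_smul, smul_eq_mul]
      have := congrFun (star_mulVec' (m+1) A (fun i => star (w i))) i
      simp only at this
      rw [this]
      simp only [star_star]
      congr 1
      simp [Complex.star_def, Complex.conj_ofReal]
    rw [h1, Matrix.mulVec_add, Matrix.mulVec_smul, ← hA', Matrix.mulVec_mulVec, hmul,
      hu, smul_add, ← hσ2]
    rw [smul_smul]
    abel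
  by_cases hu0 : u = 0
  · -- then A *ᵥ (star w) = -(σ:ℂ) • w ; take v = I • w
    have hAw : A *ᵥ (fun i => star (w i)) = -((σ : ℂ) • ⇑w) := by
      have := hu0
      rw [hu] at this
      rw [eq_neg_iff_add_eq_zero]
      exact this
    refine ⟨σ, Complex.I • w, hσ, ?_, ?_⟩
    · rw [norm_smul, Complex.norm_I, one_mul, hwnorm]
    · have h2 : (fun i => star ((Complex.I • w) i)) = (-Complex.I) • (fun i => star (w i)) := by
        ext i
        simp [Complex.star_def, mul_comm]
      rw [h2, Matrix.mulVec_smul, hAw]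
      ext i
      show _ = (σ:ℂ) * (Complex.I * w i)
      simp only [Pi.smul_apply, Pi.neg_apply, smul_eq_mul, neg_mul, mul_neg, neg_neg]
      ring_nf
  · -- normalize u
    set uE : EuclideanSpace ℂ (Fin (m+1)) := WithLp.toLp 2 u with huE
    have hnu : ‖uE‖ ≠ 0 := by
      simpa [norm_eq_zero, huE] using hu0
    refine ⟨σ, (‖uE‖⁻¹ : ℝ) • uE, hσ, ?_, ?_⟩
    · rw [norm_smul]
      simp [abs_of_nonneg (inv_nonneg.mpr (norm_nonneg uE)), inv_mul_cancel₀ hnu]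
    · have h2 : (fun i => star (((‖uE‖⁻¹ : ℝ) • uE) i))
          = ((‖uE‖⁻¹ : ℝ) : ℂ) • (fun i => star (u i)) := by
        ext i
        simp [Complex.star_def, Complex.conj_ofReal, huE]
      rw [h2, Matrix.mulVec_smul, hAu]
      ext i
      simp [smul_smul]
      ring


-- extend unit vector to orthonormal basis, indexed so that index 0 is v
lemma step2 (m : ℕ) (v : EuclideanSpace ℂ (Fin (m+1))) (hv : ‖v‖ = 1) :
    ∃ b : OrthonormalBasis (Fin (m+1)) ℂ (EuclideanSpace ℂ (Fin (m+1))), b 0 = v := by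
  have hcard : Module.finrank ℂ (EuclideanSpace ℂ (Fin (m+1))) = Fintype.card (Fin (m+1)) := by
    simp [finrank_euclideanSpace]
  have horth : Orthonormal ℂ (({0} : Set (Fin (m+1))).restrict (fun _ => v)) := by
    rw [orthonormal_iff_ite]
    intro i j
    have : i = j := Subsingleton.elim i j
    subst this
    simp [inner_self_eq_norm_sq_to_K, hv, Set.restrict]
  obtain ⟨b, hb⟩ := horth.exists_orthonormalBasis_extension_of_card_eq hcard
  exact ⟨b, hb 0 rfl⟩

-- matrix with columns b, unitary
lemma step3 (m : ℕ) (b : OrthonormalBasis (Fin m) ℂ (EuclideanSpace ℂ (Fin m))) :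
    (Matrix.of fun i j => b j i)ᴴ * (Matrix.of fun i j => b j i) = 1 := by
  ext i j
  have hb := orthonormal_iff_ite.mp b.orthonormal i j
  rw [PiLp.inner_apply] at hb
  simp only [RCLike.inner_apply] at hb
  simpa [Matrix.mul_apply, Matrix.conjTranspose_apply, Matrix.one_apply, Matrix.of_apply,
    Complex.star_def, mul_comm] using hb


lemma takagi : ∀ (n : ℕ) (A : Matrix (Fin n) (Fin n) ℂ), Aᵀ = A →
    ∃ (V : Matrix (Fin n) (Fin n) ℂ) (d : Fin n → ℝ),
      Vᴴ * V = 1 ∧ V * Vᴴ = 1 ∧ (∀ i, 0 ≤ d i) ∧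
      A = V * Matrix.diagonal (fun i => (d i : ℂ)) * Vᵀ := by
  intro n
  induction n with
  | zero =>
    intro A _
    exact ⟨1, 0, by simp, by simp, fun i => le_refl _, by ext i j; exact i.elim0⟩
  | succ m ih =>
    intro A hsymm
    obtain ⟨σ, v, hσ, hv1, hAv⟩ := step1 m A hsymm
    obtain ⟨b, hb0⟩ := step2 m v hv1
    set V : Matrix (Fin (m+1)) (Fin (m+1)) ℂ := Matrix.of fun i j => b j i with hV
    have hVl : Vᴴ * V = 1 := step3 (m+1) b
    have hVr : V * Vᴴ = 1 := mul_eq_one_comm.mp hVl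
    set C : Matrix (Fin (m+1)) (Fin (m+1)) ℂ := Vᴴ * A * (V.map (starRingEnd ℂ)) with hC
    have hmapV : V.map (starRingEnd ℂ) = Vᴴᵀ := by
      ext i j; simp [Matrix.conjTranspose_apply, Matrix.map_apply]
    have hCsymm : Cᵀ = C := by
      rw [hC, hmapV, Matrix.transpose_mul, Matrix.transpose_mul, Matrix.transpose_transpose,
        Matrix.mul_assoc, hsymm]
    have hCcol : ∀ j, C j 0 = if j = 0 then (σ : ℂ) else 0 := by
      intro j
      have hcol : (fun k => (V.map (starRingEnd ℂ)) k 0) = fun k => star (v k) := by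
        ext k
        simp [Matrix.map_apply, hV, hb0, Complex.star_def]
      have h1 : C j 0 = ((Vᴴ * A) *ᵥ (fun k => star (v k))) j := by
        rw [hC, ← hcol]
        simp [Matrix.mul_apply, Matrix.mulVec, dotProduct]
      rw [h1, ← Matrix.mulVec_mulVec, hAv, Matrix.mulVec_smul]
      have h2 : Vᴴ *ᵥ (v : Fin (m+1) → ℂ) = fun k => if k = 0 then 1 else 0 := by
        ext k
        have hb := orthonormal_iff_ite.mp b.orthonormal k 0
        rw [PiLp.inner_apply] at hb
        simp only [RCLike.inner_apply] at hb
        simpa [Matrix.mulVec, dotProduct, Matrix.conjTranspose_apply, hV, hb0,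
          Complex.star_def, mul_comm] using hb
      rw [h2]
      simp only [Pi.smul_apply, smul_eq_mul]
      split <;> simp
    have hCrow : ∀ j, C 0 j = if j = 0 then (σ : ℂ) else 0 := by
      intro j
      conv_lhs => rw [← hCsymm]
      rw [Matrix.transpose_apply]
      exact hCcol j
    set C' : Matrix (Fin m) (Fin m) ℂ := C.submatrix Fin.succ Fin.succ with hC'def
    have hC'symm : C'ᵀ = C' := by
      ext i j
      simp only [hC'def, Matrix.transpose_apply, Matrix.submatrix_apply]
      exact congrFun (congrFun hCsymm _) _
    obtain ⟨W, d', hWl, hWr, hd', hWD⟩ := ih C' hC'symm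
    set V₂ : Matrix (Fin (m+1)) (Fin (m+1)) ℂ :=
      Matrix.of (Fin.cons (Fin.cons 1 0) (fun i => Fin.cons 0 (W i))) with hV₂
    set d : Fin (m+1) → ℝ := Fin.cons σ d' with hd
    have hV₂l : V₂ᴴ * V₂ = 1 := by
      ext i j
      rw [Matrix.mul_apply]
      simp only [Matrix.conjTranspose_apply]
      rw [Fin.sum_univ_succ]
      refine Fin.cases ?_ (fun i' => ?_) i <;> refine Fin.cases ?_ (fun j' => ?_) j
      · simp [hV₂, Matrix.one_apply]
      · simp [hV₂, Matrix.one_apply, Fin.succ_ne_zero, eq_comm]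
      · simp [hV₂, Matrix.one_apply, Fin.succ_ne_zero, eq_comm]
      · have hthis := congrFun (congrFun hWl i') j'
        rw [Matrix.mul_apply] at hthis
        simp only [Matrix.conjTranspose_apply] at hthis
        simp only [hV₂, Matrix.of_apply, Fin.cons_succ, Fin.cons_zero, Pi.zero_apply,
          star_zero, zero_mul, mul_zero]
        rw [hthis]
        simp [Matrix.one_apply, Fin.succ_inj]
    have hCD : C = V₂ * Matrix.diagonal (fun i => (d i : ℂ)) * V₂ᵀ := by
      ext i j
      rw [Matrix.mul_apply]
      simp only [Matrix.mul_diagonal, Matrix.transpose_apply]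
      rw [Fin.sum_univ_succ]
      refine Fin.cases ?_ (fun i' => ?_) i <;> refine Fin.cases ?_ (fun j' => ?_) j
      · rw [hCcol 0]
        simp [hV₂, hd]
      · rw [hCrow]
        simp [hV₂, hd, Fin.succ_ne_zero]
      · rw [hCcol]
        simp [hV₂, hd, Fin.succ_ne_zero]
      · have hsub : C i'.succ j'.succ = C' i' j' := rfl
        rw [hsub, hWD, Matrix.mul_apply]
        simp only [Matrix.mul_diagonal, Matrix.transpose_apply]
        simp [hV₂, hd]
    have hVmapT : V.map (starRingEnd ℂ) * Vᵀ = 1 := by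
      rw [hmapV, ← Matrix.transpose_mul, hVr, Matrix.transpose_one]
    have hA : A = V * C * Vᵀ := by
      rw [hC]
      rw [Matrix.mul_assoc, Matrix.mul_assoc, hVmapT, Matrix.mul_one, ← Matrix.mul_assoc, hVr,
        Matrix.one_mul]
    refine ⟨V * V₂, d, ?_, ?_, ?_, ?_⟩
    · rw [Matrix.conjTranspose_mul, Matrix.mul_assoc, ← Matrix.mul_assoc Vᴴ, hVl,
        Matrix.one_mul, hV₂l]
    · rw [Matrix.conjTranspose_mul, Matrix.mul_assoc, ← Matrix.mul_assoc V₂,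
        mul_eq_one_comm.mp hV₂l, Matrix.one_mul, hVr]
    · intro i
      refine Fin.cases ?_ ?_ i
      · exact hσ
      · exact fun i' => hd' i'
    · rw [hA, hCD, Matrix.transpose_mul]
      noncomm_ring

/-- Let `Q̂` be a positive definite Hermitian matrix and `B` such that, in a basis `P`
in which `Q̂` becomes the identity (`P Q̂ P* = 1`), the transformed matrix
`conj(P) B P⁻¹` is complex symmetric. Then there is a unitary `U` such that
`conj(U) (conj(P) B P⁻¹) U⁻¹` is diagonal with nonnegative real entries. -/
theorem stmt10 (r : ℕ) (Qhat B P : Matrix (Fin r) (Fin r) ℂ)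
    (hQ : Qhat.PosDef)
    (hP : P * Qhat * Pᴴ = 1)
    (hsym : (P.map (starRingEnd ℂ) * B * P⁻¹)ᵀ = P.map (starRingEnd ℂ) * B * P⁻¹) :
    ∃ U : Matrix (Fin r) (Fin r) ℂ, U ∈ Matrix.unitaryGroup (Fin r) ℂ ∧
      (∀ i j, i ≠ j →
        (U.map (starRingEnd ℂ) * (P.map (starRingEnd ℂ) * B * P⁻¹) * U⁻¹) i j = 0) ∧
      (∀ i, ∃ c : ℝ, 0 ≤ c ∧
        (U.map (starRingEnd ℂ) * (P.map (starRingEnd ℂ) * B * P⁻¹) * U⁻¹) i i = (c : ℂ)) := by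
  set A : Matrix (Fin r) (Fin r) ℂ := P.map (starRingEnd ℂ) * B * P⁻¹ with hA
  obtain ⟨V, d, hVl, hVr, hd, hVD⟩ := takagi r A hsym
  have hmapV : V.map (starRingEnd ℂ) = Vᴴᵀ := by
    ext i j; simp [Matrix.conjTranspose_apply, Matrix.map_apply]
  have hmapVT : Vᵀ.map (starRingEnd ℂ) = Vᴴ := by
    ext i j; simp [Matrix.conjTranspose_apply, Matrix.map_apply]
  -- U := Vᵀ
  have hUU : Vᵀ * V.map (starRingEnd ℂ) = 1 := by
    rw [hmapV, ← Matrix.transpose_mul, hVl, Matrix.transpose_one]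
  have hUU' : V.map (starRingEnd ℂ) * Vᵀ = 1 := by
    rw [hmapV, ← Matrix.transpose_mul, hVr, Matrix.transpose_one]
  have hUinv : (Vᵀ)⁻¹ = V.map (starRingEnd ℂ) := Matrix.inv_eq_right_inv hUU
  have hmem : Vᵀ ∈ Matrix.unitaryGroup (Fin r) ℂ := by
    rw [Matrix.mem_unitaryGroup_iff]
    show Vᵀ * (Vᵀ)ᴴ = 1
    have : Vᵀᴴ = V.map (starRingEnd ℂ) := by
      ext i j; simp [Matrix.conjTranspose_apply, Matrix.map_apply]
    rw [this]
    exact hUU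
  have hdiag : Vᵀ.map (starRingEnd ℂ) * A * (Vᵀ)⁻¹
      = Matrix.diagonal (fun i => (d i : ℂ)) := by
    rw [hmapVT, hUinv, hVD]
    rw [Matrix.mul_assoc, Matrix.mul_assoc, hUU, Matrix.mul_one, ← Matrix.mul_assoc, hVl,
      Matrix.one_mul]
  refine ⟨Vᵀ, hmem, ?_, ?_⟩
  · intro i j hij
    rw [hdiag]
    exact Matrix.diagonal_apply_ne _ hij
  · intro i
    refine ⟨d i, hd i, ?_⟩
    rw [hdiag]
    exact Matrix.diagonal_apply_eq _ i
end
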